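/- Let A = (a_{ij})_{i,j ∈ {3,4,5}} be a 3×3 real matrix whose entries satisfy the nine relations: a₄₄a₃₃ − a₄₃a₃₄ − a₃₃ = 0, a₅₄a₃₃ − a₅₃a₃₄ − a₄₃ = 0, a₅₄a₄₃ − a₅₃a₄₄ − a₅₃ = 0, a₄₅a₃₃ − a₄₃a₃₅ − a₃₄ = 0, a₅₅a₃₃ − a₅₃a₃₅ − a₄₄ = 0, a₅₅a₄₃ − a₅₄ − a₅₃a₄₅ = 0, a₄₅a₃₄ − a₄₄a₃₅ − a₃₅ = 0, a₅₅a₃₄ − a₅₄a₃₅ − a₄₅ = 0, a₅₅a₄₄ − a₅₅ − a₅₄a₄₅ = 0. If a₃₅ ≠ 0, then a₃₃ = a₃₄²/(2a₃₅), a₄₃ = a₃₄(a₄₅a₃₄ − 2a₃₅)/(2a₃₅²), a₄₄ = a₄₅a₃₄/a₃₅ − 1, a₅₃ = (a₄₅²a₃₄² − 4a₄₅a₃₅a₃₄ + 4a₃₅²)/(4a₃₅³), a₅₄ = a₄₅(a₄₅a₃₄ − 2a₃₅)/(2a₃₅²), a₅₅ = a₄₅²/(2a₃₅). -/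
import Mathlib


/-- In the automorphism conditions for the Lie algebra `{X₃, X₄, X₅}`, the case
`a₃₅ ≠ 0` forces the stated form of the matrix entries. -/
theorem automorphism_case_a35_ne_zero
    (a₃₃ a₃₄ a₃₅ a₄₃ a₄₄ a₄₅ a₅₃ a₅₄ a₅₅ : ℝ)
    (e1 : a₄₄ * a₃₃ - a₄₃ * a₃₄ - a₃₃ = 0)
    (e2 : a₅₄ * a₃₃ - a₅₃ * a₃₄ - a₄₃ = 0)
    (e3 : a₅₄ * a₄₃ - a₅₃ * a₄₄ - a₅₃ = 0)
    (e4 : a₄₅ * a₃₃ - a₄₃ * a₃₅ - a₃₄ = 0)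
    (e5 : a₅₅ * a₃₃ - a₅₃ * a₃₅ - a₄₄ = 0)
    (e6 : a₅₅ * a₄₃ - a₅₄ - a₅₃ * a₄₅ = 0)
    (e7 : a₄₅ * a₃₄ - a₄₄ * a₃₅ - a₃₅ = 0)
    (e8 : a₅₅ * a₃₄ - a₅₄ * a₃₅ - a₄₅ = 0)
    (e9 : a₅₅ * a₄₄ - a₅₅ - a₅₄ * a₄₅ = 0)
    (h35 : a₃₅ ≠ 0) :
    a₃₃ = a₃₄ ^ 2 / (2 * a₃₅) ∧
    a₄₃ = a₃₄ * (a₄₅ * a₃₄ - 2 * a₃₅) / (2 * a₃₅ ^ 2) ∧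
    a₄₄ = a₄₅ * a₃₄ / a₃₅ - 1 ∧
    a₅₃ = (a₄₅ ^ 2 * a₃₄ ^ 2 - 4 * a₄₅ * a₃₅ * a₃₄ + 4 * a₃₅ ^ 2) / (4 * a₃₅ ^ 3) ∧
    a₅₄ = a₄₅ * (a₄₅ * a₃₄ - 2 * a₃₅) / (2 * a₃₅ ^ 2) ∧
    a₅₅ = a₄₅ ^ 2 / (2 * a₃₅) := by
  refine ⟨?_, ?_, ?_, ?_, ?_, ?_⟩
  · field_simp
    linear_combination -a₃₅*e1 + a₃₄*e4 - a₃₃*e7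
  · field_simp
    linear_combination -2*a₃₅*e4 + a₄₅*(-a₃₅*e1 + a₃₄*e4 - a₃₃*e7)
  · field_simp
    linear_combination -e7
  · field_simp
    linear_combination -4*a₃₅^2*e5 + 2*a₃₅*a₃₃*(-a₃₅*e9 + a₄₅*e8 - a₅₅*e7) + a₄₅^2*(-a₃₅*e1 + a₃₄*e4 - a₃₃*e7) + 4*a₃₅*e7
  · field_simp
    linear_combination -2*a₃₅*e8 + a₃₄*(-a₃₅*e9 + a₄₅*e8 - a₅₅*e7)
  · field_simp
    linear_combination -a₃₅*e9 + a₄₅*e8 - a₅₅*e7
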